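/- Let E be an elliptic curve defined over ℚ, let K be a number field that is a finite Galois extension of ℚ, and let m and n be positive integers with n ≥ 2. Suppose that the mn-torsion subgroup of E(K) is isomorphic to ℤ/mℤ × ℤ/mnℤ, and let P ∈ E(K) be a point of additive order mn. Write the point mP (which is nonzero) in affine coordinates as mP = (x₀, y₀) with x₀, y₀ ∈ K. Then the degree [ℚ(x₀, y₀) : ℚ] of the field generated over ℚ by the coordinates of mP divides gcd(φ(n), [K : ℚ]), where φ is Euler's totient function. -/

import Mathlib

open WeierstrassCurve
open scoped WeierstrassCurve.Affine

/-- The `N`-torsion subgroup of an additive commutative group. -/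
def nTorsion (G : Type*) [AddCommGroup G] (N : ℕ) : AddSubgroup G where
  carrier := {P | N • P = 0}
  zero_mem' := smul_zero N
  add_mem' := fun {a b} ha hb => by
    simp only [Set.mem_setOf_eq] at *
    rw [smul_add, ha, hb, add_zero]
  neg_mem' := fun {a} ha => by
    simp only [Set.mem_setOf_eq] at *
    rw [smul_neg, ha, neg_zero]

section Aux

variable {K : Type*} [Field K] [Algebra ℚ K]

open Classical in
/-- The action of a `ℚ`-algebra automorphism on the points of an elliptic curve. -/
noncomputable def pointMap (E : WeierstrassCurve ℚ) (σ : K ≃ₐ[ℚ] K) : (E.baseChange K).toAffine.Point →+ (E.baseChange K).toAffine.Point :=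
  Affine.Point.map (W' := E.toAffine) σ.toAlgHom

open Classical in
lemma pointMap_comp (E : WeierstrassCurve ℚ) (σ τ : K ≃ₐ[ℚ] K) (R : (E.baseChange K).toAffine.Point) :
    pointMap E σ (pointMap E τ R) = pointMap E (σ * τ) R := by
  cases R <;> rfl

open Classical in
lemma pointMap_one (E : WeierstrassCurve ℚ) (R : (E.baseChange K).toAffine.Point) :
    pointMap E (1 : K ≃ₐ[ℚ] K) R = R := by
  cases R <;> rfl

/-- The intermediate field of elements fixed by an automorphism. -/
def fixedPts (σ : K ≃ₐ[ℚ] K) : IntermediateField ℚ K :=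
  { AlgHom.equalizer (σ : K →ₐ[ℚ] K) (AlgHom.id ℚ K) with
    inv_mem' := fun x hx => by
      have h : σ x = x := hx
      show σ x⁻¹ = x⁻¹
      rw [map_inv₀, h] }

lemma mem_fixedPts (σ : K ≃ₐ[ℚ] K) (x : K) : x ∈ fixedPts σ ↔ σ x = x := Iff.rfl

/-- The key torsion-theoretic claim: if the `mn`-torsion is `ZMod m × ZMod (m*n)` and
`P` has order `mn`, then `m • R` is a multiple of `m • P` for every `mn`-torsion `R`. -/
lemma key_claim (G : Type*) [AddCommGroup G] (m n : ℕ) (hm : 0 < m) (hn : 2 ≤ n)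
    (T : AddSubgroup G) (hT : ∀ x : G, x ∈ T ↔ (m * n) • x = 0)
    (e : T ≃+ (ZMod m × ZMod (m * n)))
    (P : G) (hP : addOrderOf P = m * n)
    (R : G) (hR : (m * n) • R = 0) :
    ∃ k : ℤ, m • R = k • (m • P) := by
  have hmn : m * n ≠ 0 := by positivity
  haveI : NeZero (m * n) := ⟨hmn⟩
  have hPT : P ∈ T := (hT P).mpr (by rw [← hP, addOrderOf_nsmul_eq_zero])
  have hRT : R ∈ T := (hT R).mpr hR
  set p : ZMod m × ZMod (m * n) := e ⟨P, hPT⟩ with hp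
  set r : ZMod m × ZMod (m * n) := e ⟨R, hRT⟩ with hr
  have hsm : ∀ x : ZMod m × ZMod (m * n), m • x = (0, (m : ZMod (m * n)) * x.2) := by
    intro x
    have : m • x.1 = 0 := by
      rw [nsmul_eq_mul, ZMod.natCast_self, zero_mul]
    rw [Prod.smul_def, this, nsmul_eq_mul]
  have hmem : ∀ a : ZMod (m * n),
      (m : ZMod (m * n)) * a ∈ AddSubgroup.zmultiples (m : ZMod (m * n)) := by
    intro a
    refine AddSubgroup.mem_zmultiples_iff.mpr ⟨(a.val : ℤ), ?_⟩
    rw [natCast_zsmul, nsmul_eq_mul, ZMod.natCast_rightInverse a]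
    exact mul_comm a _
  have hordQ : addOrderOf (m • P) = n := by
    rw [addOrderOf_nsmul' P hm.ne', hP, Nat.gcd_comm, Nat.gcd_eq_left (dvd_mul_right m n),
      Nat.mul_div_cancel_left n hm]
  have hordp : addOrderOf ((m : ZMod (m * n)) * p.2) = n := by
    have h1 : addOrderOf (m • p) = n := by
      rw [hp, ← map_nsmul, AddEquiv.addOrderOf_eq, AddSubgroup.addOrderOf_mk]
      exact hordQ
    rw [hsm p, Prod.addOrderOf, addOrderOf_zero, Nat.lcm_one_left] at h1
    exact h1
  have hordm : addOrderOf ((m : ZMod (m * n))) = n := by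
    rw [ZMod.addOrderOf_coe m hmn, Nat.gcd_comm, Nat.gcd_eq_left (dvd_mul_right m n),
      Nat.mul_div_cancel_left n hm]
  have hzeq : AddSubgroup.zmultiples ((m : ZMod (m * n)) * p.2) =
      AddSubgroup.zmultiples ((m : ZMod (m * n))) := by
    apply AddSubgroup.eq_of_le_of_card_ge
    · rw [AddSubgroup.zmultiples_le]
      exact hmem p.2
    · rw [Nat.card_zmultiples, Nat.card_zmultiples, hordp, hordm]
  have hmr : m • r ∈ AddSubgroup.zmultiples (m • p) := by
    rw [hsm r, hsm p]
    have := hzeq ▸ hmem r.2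
    obtain ⟨k, hk⟩ := AddSubgroup.mem_zmultiples_iff.mp this
    exact AddSubgroup.mem_zmultiples_iff.mpr ⟨k, by rw [Prod.smul_def, hk, smul_zero]⟩
  obtain ⟨k, hk⟩ := AddSubgroup.mem_zmultiples_iff.mp hmr
  refine ⟨k, ?_⟩
  have : (⟨m • R, T.nsmul_mem hRT m⟩ : T) = k • (⟨m • P, T.nsmul_mem hPT m⟩ : T) := by
    apply e.injective
    rw [map_zsmul]
    have e1 : e ⟨m • R, T.nsmul_mem hRT m⟩ = m • r := by rw [hr, ← map_nsmul]; rfl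
    have e2 : e ⟨m • P, T.nsmul_mem hPT m⟩ = m • p := by rw [hp, ← map_nsmul]; rfl
    rw [e1, e2, hk]
  simpa [Subtype.ext_iff] using this

end Aux

open Classical in
theorem degree_of_multiple_point_divides (E : WeierstrassCurve ℚ) [E.IsElliptic]
    (K : Type*) [Field K] [NumberField K] [IsGalois ℚ K]
    (m n : ℕ) (hm : 0 < m) (hn : 2 ≤ n)
    (htors : Nonempty
      (nTorsion (E.baseChange K).toAffine.Point (m * n) ≃+ (ZMod m × ZMod (m * n))))
    (P : (E.baseChange K).toAffine.Point) (hP : addOrderOf P = m * n)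
    (x₀ y₀ : K) (hxy : (E.baseChange K).toAffine.Nonsingular x₀ y₀)
    (hmP : m • P = WeierstrassCurve.Affine.Point.some _ _ hxy) :
    Module.finrank ℚ (IntermediateField.adjoin ℚ ({x₀, y₀} : Set K)) ∣
      Nat.gcd (Nat.totient n) (Module.finrank ℚ K) := by
  classical
  obtain ⟨e⟩ := htors
  set Q : (E.baseChange K).toAffine.Point := m • P with hQ
  set F : IntermediateField ℚ K := IntermediateField.adjoin ℚ ({x₀, y₀} : Set K) with hF
  set C : AddSubgroup (E.baseChange K).toAffine.Point := AddSubgroup.zmultiples Q with hC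
  have hT : ∀ x : (E.baseChange K).toAffine.Point, x ∈ nTorsion (E.baseChange K).toAffine.Point (m * n) ↔ (m * n) • x = 0 := fun _ => Iff.rfl
  have claim : ∀ R : (E.baseChange K).toAffine.Point, (m * n) • R = 0 → m • R ∈ C := by
    intro R hR
    obtain ⟨k, hk⟩ := key_claim (E.baseChange K).toAffine.Point m n hm hn _ hT e P hP R hR
    exact AddSubgroup.mem_zmultiples_iff.mpr ⟨k, hk.symm⟩
  -- the Galois action preserves C
  have hPtors : (m * n) • P = 0 := by rw [← hP, addOrderOf_nsmul_eq_zero]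
  have hσC : ∀ (σ : K ≃ₐ[ℚ] K) (c : (E.baseChange K).toAffine.Point), c ∈ C → pointMap E σ c ∈ C := by
    intro σ c hc
    obtain ⟨k, hk⟩ := AddSubgroup.mem_zmultiples_iff.mp hc
    have hQσ : pointMap E σ Q ∈ C := by
      rw [hQ, map_nsmul]
      refine claim _ ?_
      rw [← map_nsmul, hPtors, map_zero]
    rw [← hk, map_zsmul]
    exact C.zsmul_mem hQσ k
  -- the character into the automorphisms of C
  let χ : (K ≃ₐ[ℚ] K) →* Multiplicative (AddAut C) :=
    { toFun := fun σ => Multiplicative.ofAdd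
        { toFun := fun c => ⟨pointMap E σ c, hσC σ c c.2⟩
          invFun := fun c => ⟨pointMap E σ⁻¹ c, hσC σ⁻¹ c c.2⟩
          left_inv := fun c => Subtype.ext (by
            show pointMap E σ⁻¹ (pointMap E σ (c : (E.baseChange K).toAffine.Point)) = c
            rw [pointMap_comp, inv_mul_cancel, pointMap_one])
          right_inv := fun c => Subtype.ext (by
            show pointMap E σ (pointMap E σ⁻¹ (c : (E.baseChange K).toAffine.Point)) = c
            rw [pointMap_comp, mul_inv_cancel, pointMap_one])
          map_add' := fun a b => Subtype.ext ((pointMap E σ).map_add a b) }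
      map_one' := by
        refine AddEquiv.ext fun c => Subtype.ext ?_
        exact pointMap_one E (c : (E.baseChange K).toAffine.Point)
      map_mul' := fun σ τ => by
        refine AddEquiv.ext fun c => Subtype.ext ?_
        exact (pointMap_comp E σ τ (c : (E.baseChange K).toAffine.Point)).symm }
  -- kernel of χ is contained in the fixing subgroup of F
  have hker : χ.ker ≤ F.fixingSubgroup := by
    intro σ hσ
    have h1 : pointMap E σ Q = Q := by
      have := congrArg (fun f : Multiplicative (AddAut C) => (Multiplicative.toAdd f ⟨Q, AddSubgroup.mem_zmultiples Q⟩ : (E.baseChange K).toAffine.Point)) hσ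
      simp at this
      exact this
    rw [hmP] at h1
    have h2 : σ x₀ = x₀ ∧ σ y₀ = y₀ := by
      rw [pointMap, Affine.Point.map_some, Affine.Point.some.injEq] at h1
      exact h1
    rw [IntermediateField.mem_fixingSubgroup_iff]
    intro z hz
    have hle : F ≤ fixedPts σ := by
      rw [hF, IntermediateField.adjoin_le_iff]
      rintro w (rfl | rfl)
      · exact h2.1
      · exact h2.2
    exact hle hz
  -- the index of the fixing subgroup is the degree
  have hindex : F.fixingSubgroup.index = Module.finrank ℚ F := by
    have h1 : F.fixingSubgroup.index * Nat.card F.fixingSubgroup = Nat.card (K ≃ₐ[ℚ] K) :=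
      Subgroup.index_mul_card _
    have h2 : Nat.card F.fixingSubgroup = Module.finrank F K := by
      rw [IsGalois.card_fixingSubgroup_eq_finrank]
    have h3 : Nat.card (K ≃ₐ[ℚ] K) = Module.finrank ℚ K := by
      rw [IsGalois.card_aut_eq_finrank]
    have h4 : Module.finrank ℚ F * Module.finrank F K = Module.finrank ℚ K :=
      Module.finrank_mul_finrank ℚ F K
    have h5 : 0 < Module.finrank F K := Module.finrank_pos
    apply Nat.eq_of_mul_eq_mul_right h5
    rw [h4, ← h3, ← h1, h2]
  -- cardinality of AddAut C
  have hordQ : addOrderOf Q = n := by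
    rw [hQ, addOrderOf_nsmul' P hm.ne', hP, Nat.gcd_comm, Nat.gcd_eq_left (dvd_mul_right m n),
      Nat.mul_div_cancel_left n hm]
  have hcardC : Nat.card C = n := by rw [hC, Nat.card_zmultiples, hordQ]
  haveI hCfin : Finite C := by
    have : (0 : ℕ) < Nat.card C := by omega
    exact (Nat.card_pos_iff.mp this).2
  haveI hCcyc : IsAddCyclic C := by
    refine ⟨⟨Q, AddSubgroup.mem_zmultiples Q⟩, fun c => ?_⟩
    obtain ⟨k, hk⟩ := AddSubgroup.mem_zmultiples_iff.mp c.2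
    exact ⟨k, Subtype.ext (by simpa using hk)⟩
  have hcardAut : Nat.card (AddAut C) = Nat.totient n := by
    have h1 : Nat.card (AddAut C) = Nat.card (MulAut (Multiplicative C)) :=
      Nat.card_congr (AddEquiv.toMultiplicative (G := ↥C) (H := ↥C))
    have h2 : Nat.card (Multiplicative ↥C) = n :=
      (Nat.card_congr Multiplicative.toAdd).trans hcardC
    rw [h1, IsCyclic.card_mulAut, h2]
  -- conclusion
  have hdvd1 : Module.finrank ℚ F ∣ Nat.totient n := by
    rw [← hindex, ← hcardAut]
    calc F.fixingSubgroup.index ∣ χ.ker.index := Subgroup.index_dvd_of_le hker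
      _ = Nat.card χ.range := Subgroup.index_ker χ
      _ ∣ Nat.card (AddAut C) := Subgroup.card_subgroup_dvd_card χ.range
  have hdvd2 : Module.finrank ℚ F ∣ Module.finrank ℚ K :=
    ⟨Module.finrank F K, (Module.finrank_mul_finrank ℚ F K).symm⟩
  exact Nat.dvd_gcd hdvd1 hdvd2
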